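/- arXiv:0807.2952 — 2 statements merged into one kernel-verified Lean document; each statement's English description precedes it below -/
import Mathlib

section
/- Assume the drift condition: there exist a measurable V : X → [1,∞), a measurable set C ⊆ X, constants b, c > 0 and 0 < α ≤ 1 such that P_θV ≤ V − c V^{1−α} + b·1_C for every θ ∈ Θ. Let {r_n : n ≥ 0} be a non-increasing positive sequence. Then there exists a constant b̄ < ∞ (depending only on b, c, α) such that for every l ≥ 0, (x,θ) ∈ X × Θ, 0 ≤ β ≤ 1 and n ≥ 0, β c · E^{(l)}_{x,θ}[ Σ_{k ≥ n} r_{k+1} V^{β−α}(X_k) ] ≤ r_n E^{(l)}_{x,θ}[V^β(X_n)] + b̄ · E^{(l)}_{x,θ}[ Σ_{k ≥ n} r_{k+1} 1_C(X_k) ]. -/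
open MeasureTheory ProbabilityTheory Filter Set
open scoped ENNReal NNReal Classical

noncomputable section

namespace AdaptiveMCMC

variable {X Θ : Type*} [MeasurableSpace X] [MeasurableSpace Θ]

/-- The `W`-weighted norm distance between two measures:
`‖μ − ν‖_W = sup { |μ(g) − ν(g)| : g measurable, |g| ≤ W }`. -/
def wDist (W : X → ℝ) (μ ν : Measure X) : ℝ :=
  ⨆ g : {g : X → ℝ // Measurable g ∧ ∀ x, |g x| ≤ W x},
    |(∫ x, g.1 x ∂μ) - ∫ x, g.1 x ∂ν|

/-- Total variation distance `‖μ − ν‖_TV = sup { |μ(f) − ν(f)| : |f| ≤ 1 }`. -/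
def tvDist (μ ν : Measure X) : ℝ := wDist (fun _ => 1) μ ν

/-- `D(θ,θ') = sup_x ‖P_θ(x,·) − P_θ'(x,·)‖_TV`. -/
def Dtv (P : Θ → Kernel X X) (θ θ' : Θ) : ℝ := ⨆ x : X, tvDist (P θ x) (P θ' x)

/-- Iterates `P^n` of a kernel. -/
def kpow (P : Kernel X X) : ℕ → Kernel X X
  | 0 => Kernel.id
  | n + 1 => (kpow P n) ∘ₖ P

/-- Prepend a state to a path. -/
def prepend {α : Type*} (z : α) (ω : ℕ → α) : ℕ → α
  | 0 => z
  | n + 1 => ω n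

/-- `law l (x,θ)` is the law `P^{(l)}_{x,θ}` of the canonical nonhomogeneous Markov chain
`{Z_n = (X_n, θ_n)}` started at `(x,θ)` whose `n`-th transition kernel is `P̄(l+n)`. -/
structure IsAdaptiveLaw (Pbar : ℕ → Kernel (X × Θ) (X × Θ))
    (law : ℕ → X × Θ → Measure (ℕ → X × Θ)) : Prop where
  prob : ∀ l z, IsProbabilityMeasure (law l z)
  meas : ∀ l, Measurable (law l)
  step : ∀ l z, law l z = (Pbar l z).bind fun z' => (law (l + 1) z').map (prepend z)

/-- The marginal compatibility `∫_{A×Θ} P̄(n;(x,θ);(dx',dθ')) = P_θ(x,A)`. -/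
def Compat (P : Θ → Kernel X X) (Pbar : ℕ → Kernel (X × Θ) (X × Θ)) : Prop :=
  ∀ (n : ℕ) (x : X) (θ : Θ) (A : Set X), MeasurableSet A →
    Pbar n (x, θ) (A ×ˢ (Set.univ : Set Θ)) = P θ x A

/-- Law of the chain with initial distribution `ξ1 ⊗ ξ2` (and `l = 0`). -/
def chainLaw (law : ℕ → X × Θ → Measure (ℕ → X × Θ)) (ξ1 : Measure X) (ξ2 : Measure Θ) :
    Measure (ℕ → X × Θ) :=
  (ξ1.prod ξ2).bind (law 0)

/-- Return time `τ_C = inf {n ≥ 1 : X_n ∈ C}` (equal to `⊤` if no such `n`). -/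
def hitTime (C : Set X) (ω : ℕ → X × Θ) : ℕ∞ :=
  ⨅ m : {m : ℕ // 1 ≤ m ∧ (ω m).1 ∈ C}, (m.1 : ℕ∞)

/-- Evaluation of `r : ℕ → ℝ` at an extended natural, with value `∞` at `∞`. -/
def rEval (r : ℕ → ℝ) : ℕ∞ → ℝ≥0∞ := fun t =>
  if t = ⊤ then ⊤ else ENNReal.ofReal (r t.toNat)

end AdaptiveMCMC

namespace AdaptiveMCMC

/-! ### Auxiliary real-analytic lemmas -/

/-- Bernoulli-type inequality: `s ^ β ≤ 1 + β * (s - 1)` for `s ≥ 0`, `0 ≤ β ≤ 1`. -/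
private lemma bern {s β : ℝ} (hs : 0 ≤ s) (hβ0 : 0 ≤ β) (hβ1 : β ≤ 1) :
    s ^ β ≤ 1 + β * (s - 1) := by
  rcases eq_or_lt_of_le hβ0 with h0 | h0
  · rw [← h0, Real.rpow_zero]; simp
  · have hp : 1 ≤ 1 / β := one_le_one_div h0 hβ1
    have hsb : 0 ≤ s ^ β := Real.rpow_nonneg hs β
    have hz : (-1 : ℝ) ≤ s ^ β - 1 := by linarith
    have h := one_add_mul_self_le_rpow_one_add hz hp
    rw [show (1 : ℝ) + (s ^ β - 1) = s ^ β by ring] at h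
    have h2 : (s ^ β) ^ (1 / β) = s := by
      rw [← Real.rpow_mul hs, mul_one_div_cancel h0.ne', Real.rpow_one]
    rw [h2] at h
    have key : β * (1 / β * (s ^ β - 1)) = s ^ β - 1 := by field_simp
    nlinarith [mul_le_mul_of_nonneg_left h h0.le, key]

/-- Subadditivity of `rpow` with exponent in `[0,1]` on nonnegative reals. -/
private lemma rpow_subadd {a b p : ℝ} (ha : 0 ≤ a) (hb : 0 ≤ b) (hp : 0 ≤ p) (hp1 : p ≤ 1) :
    (a + b) ^ p ≤ a ^ p + b ^ p := by
  have h := NNReal.rpow_add_le_add_rpow a.toNNReal b.toNNReal hp hp1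
  have hab : ((a.toNNReal + b.toNNReal : ℝ≥0) : ℝ) = a + b := by
    push_cast [Real.coe_toNNReal a ha, Real.coe_toNNReal b hb]; ring
  calc (a + b) ^ p = (((a.toNNReal + b.toNNReal : ℝ≥0) : ℝ)) ^ p := by rw [hab]
    _ = (((a.toNNReal + b.toNNReal) ^ p : ℝ≥0) : ℝ) := by rw [← NNReal.coe_rpow]
    _ ≤ ((a.toNNReal ^ p + b.toNNReal ^ p : ℝ≥0) : ℝ) := by exact_mod_cast h
    _ = a ^ p + b ^ p := by
        push_cast [NNReal.coe_rpow, Real.coe_toNNReal a ha, Real.coe_toNNReal b hb]; ring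

/-- Tangent-line bound for the concave function `v ↦ v ^ β`. -/
private lemma tang {v t β : ℝ} (hv : 0 ≤ v) (ht : 1 ≤ t) (hβ0 : 0 ≤ β) (hβ1 : β ≤ 1) :
    v ^ β ≤ (1 - β) * t ^ β + β * t ^ (β - 1) * v := by
  have ht0 : (0 : ℝ) < t := lt_of_lt_of_le one_pos ht
  have h := bern (div_nonneg hv ht0.le) hβ0 hβ1
  have h2 : (v / t) ^ β = v ^ β / t ^ β := Real.div_rpow hv ht0.le β
  have h3 : (0 : ℝ) < t ^ β := Real.rpow_pos_of_pos ht0 β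
  rw [h2] at h
  have h5 := mul_le_mul_of_nonneg_right h h3.le
  rw [div_mul_cancel₀ _ h3.ne'] at h5
  have h7 : t ^ (β - 1) = t ^ β / t := by rw [Real.rpow_sub ht0, Real.rpow_one]
  have h6 : (1 + β * (v / t - 1)) * t ^ β = (1 - β) * t ^ β + β * t ^ (β - 1) * v := by
    rw [h7]; field_simp; ring
  linarith [h5, h6]

/-- Pointwise drift transfer: from level `1` drift to level `β` drift. -/
private lemma lemA {α b c β v e : ℝ} (hα0 : 0 < α) (hα1 : α ≤ 1) (hb : 0 < b) (hc : 0 < c)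
    (hβ0 : 0 ≤ β) (hβ1 : β ≤ 1) (hv : 1 ≤ v) (he : e = 0 ∨ e = 1)
    (hu : 1 ≤ v - c * v ^ (1 - α) + b * e) :
    (v - c * v ^ (1 - α) + b * e) ^ β + β * c * v ^ (β - α)
      ≤ v ^ β + (max 1 b + (c ^ (1 / α) + b) + c * (c ^ (1 / α) + 1)) * e := by
  have hv0 : (0 : ℝ) < v := lt_of_lt_of_le one_pos hv
  have hva : v ^ (1 - α) = v * v ^ (-α) := by
    rw [show (1 - α) = 1 + (-α) by ring, Real.rpow_add hv0, Real.rpow_one]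
  have hvb : v ^ (β - α) = v ^ β * v ^ (-α) := by
    rw [show (β - α) = β + (-α) by ring, Real.rpow_add hv0]
  have htnn : 0 ≤ c * v ^ (-α) := mul_nonneg hc.le (Real.rpow_nonneg hv0.le _)
  have hvβ0 : 0 ≤ v ^ β := Real.rpow_nonneg hv0.le β
  have hfac : v - c * v ^ (1 - α) = v * (1 - c * v ^ (-α)) := by rw [hva]; ring
  have core : c * v ^ (-α) ≤ 1 →
      (v - c * v ^ (1 - α)) ^ β ≤ v ^ β - β * c * v ^ (β - α) := by
    intro ht1
    have h1 : (1 - c * v ^ (-α)) ^ β ≤ 1 - β * (c * v ^ (-α)) := by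
      have := bern (s := 1 - c * v ^ (-α)) (by linarith) hβ0 hβ1
      linarith
    calc (v - c * v ^ (1 - α)) ^ β = v ^ β * (1 - c * v ^ (-α)) ^ β := by
          rw [hfac, Real.mul_rpow hv0.le (by linarith)]
      _ ≤ v ^ β * (1 - β * (c * v ^ (-α))) := mul_le_mul_of_nonneg_left h1 hvβ0
      _ = v ^ β - β * c * v ^ (β - α) := by rw [hvb]; ring
  have hca : (0 : ℝ) < c ^ (1 / α) := Real.rpow_pos_of_pos hc _
  have hccane : 0 ≤ c * (c ^ (1 / α) + 1) := by positivity
  have hmax : (0 : ℝ) ≤ max 1 b := le_trans zero_le_one (le_max_left 1 b)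
  rcases he with he | he
  · rw [he, mul_zero, add_zero] at hu ⊢
    have ht1 : c * v ^ (-α) ≤ 1 := by
      by_contra h
      push_neg at h
      rw [hfac] at hu
      nlinarith [mul_pos hv0 (by linarith : (0 : ℝ) < c * v ^ (-α) - 1)]
    have := core ht1
    linarith [hca.le, hb.le]
  · rw [he, mul_one] at hu ⊢
    by_cases ht1 : c * v ^ (-α) ≤ 1
    · have hs0 : 0 ≤ v - c * v ^ (1 - α) := by
        rw [hfac]; exact mul_nonneg hv0.le (by linarith)
      have hsub : (v - c * v ^ (1 - α) + b) ^ β ≤ (v - c * v ^ (1 - α)) ^ β + b ^ β :=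
        rpow_subadd hs0 hb.le hβ0 hβ1
      have hbb : b ^ β ≤ max 1 b := by
        calc b ^ β ≤ (max 1 b) ^ β := Real.rpow_le_rpow hb.le (le_max_right 1 b) hβ0
          _ ≤ (max 1 b) ^ (1 : ℝ) :=
              Real.rpow_le_rpow_of_exponent_le (le_max_left 1 b) hβ1
          _ = max 1 b := Real.rpow_one _
      have hcore := core ht1
      linarith [hca.le, hb.le]
    · push_neg at ht1
      have h1 : v ^ α ≤ c := by
        have hvpow : (0 : ℝ) < v ^ α := Real.rpow_pos_of_pos hv0 α
        have hvneg : v ^ (-α) = (v ^ α)⁻¹ := by rw [Real.rpow_neg hv0.le]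
        rw [hvneg, ← div_eq_mul_inv] at ht1
        exact le_of_lt ((one_lt_div hvpow).mp ht1)
      have hvc : v ≤ c ^ (1 / α) := by
        have hpow : (v ^ α) ^ (1 / α) = v := by
          rw [← Real.rpow_mul hv0.le, mul_one_div_cancel hα0.ne', Real.rpow_one]
        rw [← hpow]
        exact Real.rpow_le_rpow (Real.rpow_nonneg hv0.le α) h1 (by positivity)
      have hu0 : (0 : ℝ) ≤ v - c * v ^ (1 - α) + b := by linarith
      have huβ : (v - c * v ^ (1 - α) + b) ^ β ≤ v - c * v ^ (1 - α) + b := by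
        calc (v - c * v ^ (1 - α) + b) ^ β ≤ (v - c * v ^ (1 - α) + b) ^ (1 : ℝ) :=
              Real.rpow_le_rpow_of_exponent_le hu hβ1
          _ = _ := Real.rpow_one _
      have hub : v - c * v ^ (1 - α) + b ≤ c ^ (1 / α) + b := by
        have h2 : 0 ≤ c * v ^ (1 - α) := mul_nonneg hc.le (Real.rpow_nonneg hv0.le _)
        linarith
      have hvba : v ^ (β - α) ≤ v := by
        calc v ^ (β - α) ≤ v ^ (1 : ℝ) :=
              Real.rpow_le_rpow_of_exponent_le hv (by linarith)
          _ = v := Real.rpow_one v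
      have h2 : β * c * v ^ (β - α) ≤ c * (c ^ (1 / α) + 1) := by
        have h3 : 0 ≤ v ^ (β - α) := Real.rpow_nonneg hv0.le _
        have h4 : β * c * v ^ (β - α) ≤ c * v ^ (β - α) := by
          nlinarith [mul_nonneg (mul_nonneg (by linarith : (0:ℝ) ≤ 1 - β) hc.le) h3]
        have h5 : c * v ^ (β - α) ≤ c * v := mul_le_mul_of_nonneg_left hvba hc.le
        have h6 : c * v ≤ c * c ^ (1 / α) := mul_le_mul_of_nonneg_left hvc hc.le
        nlinarith
      linarith

/-! ### Auxiliary chain lemmas -/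

section Chain

variable {X Θ : Type*} [MeasurableSpace X] [MeasurableSpace Θ]

private lemma measurable_prepend (z : X × Θ) : Measurable (prepend z) := by
  refine measurable_pi_iff.mpr fun n => ?_
  cases n with
  | zero => exact measurable_const
  | succ n => exact measurable_pi_apply n

private lemma lint_eval_zero {Pbar : ℕ → Kernel (X × Θ) (X × Θ)}
    (hPbarm : ∀ n, IsMarkovKernel (Pbar n))
    {law : ℕ → X × Θ → Measure (ℕ → X × Θ)} (hlaw : IsAdaptiveLaw Pbar law)
    {g : X × Θ → ℝ≥0∞} (hg : Measurable g) (l : ℕ) (z : X × Θ) :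
    ∫⁻ ω, g (ω 0) ∂ law l z = g z := by
  haveI := hPbarm l
  rw [hlaw.step l z,
    Measure.lintegral_bind (μ := fun z' => (law (l + 1) z').map (prepend z))
      (f := fun ω => g (ω 0))
      ((Measure.measurable_map _ (measurable_prepend z)).comp
        (hlaw.meas (l + 1))).aemeasurable (by exact (hg.comp (measurable_pi_apply 0)).aemeasurable)]
  have h : ∀ z' : X × Θ,
      ∫⁻ ω, g (ω 0) ∂ ((law (l + 1) z').map (prepend z)) = g z := by
    intro z'
    haveI := hlaw.prob (l + 1) z'
    rw [lintegral_map (f := fun ω => g (ω 0)) (by exact hg.comp (measurable_pi_apply 0))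
      (measurable_prepend z)]
    simp [prepend]
  simp_rw [h]
  simp

private lemma lint_eval_succ {Pbar : ℕ → Kernel (X × Θ) (X × Θ)}
    {law : ℕ → X × Θ → Measure (ℕ → X × Θ)} (hlaw : IsAdaptiveLaw Pbar law)
    {g : X × Θ → ℝ≥0∞} (hg : Measurable g) (k l : ℕ) (z : X × Θ) :
    ∫⁻ ω, g (ω (k + 1)) ∂ law l z
      = ∫⁻ z', (∫⁻ ω, g (ω k) ∂ law (l + 1) z') ∂ (Pbar l z) := by
  rw [hlaw.step l z,
    Measure.lintegral_bind (μ := fun z' => (law (l + 1) z').map (prepend z))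
      (f := fun ω => g (ω (k + 1)))
      ((Measure.measurable_map _ (measurable_prepend z)).comp
        (hlaw.meas (l + 1))).aemeasurable (by exact (hg.comp (measurable_pi_apply (k + 1))).aemeasurable)]
  refine lintegral_congr fun z' => ?_
  rw [lintegral_map (f := fun ω => g (ω (k + 1))) (by exact hg.comp (measurable_pi_apply (k + 1)))
    (measurable_prepend z)]
  rfl

private lemma measurable_lintEval {Pbar : ℕ → Kernel (X × Θ) (X × Θ)}
    {law : ℕ → X × Θ → Measure (ℕ → X × Θ)} (hlaw : IsAdaptiveLaw Pbar law)
    {g : X × Θ → ℝ≥0∞} (hg : Measurable g) (k l : ℕ) :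
    Measurable fun z => ∫⁻ ω, g (ω k) ∂ law l z :=
  (Measure.measurable_lintegral (hg.comp (measurable_pi_apply k))).comp (hlaw.meas l)

private lemma chain_drift {Pbar : ℕ → Kernel (X × Θ) (X × Θ)}
    (hPbarm : ∀ n, IsMarkovKernel (Pbar n))
    {law : ℕ → X × Θ → Measure (ℕ → X × Θ)} (hlaw : IsAdaptiveLaw Pbar law)
    {g1 g2 g3 : X × Θ → ℝ≥0∞}
    (hg1 : Measurable g1) (hg2 : Measurable g2) (hg3 : Measurable g3)
    (hstep : ∀ l z, (∫⁻ z', g1 z' ∂ (Pbar l z)) + g2 z ≤ g1 z + g3 z) :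
    ∀ k l z, (∫⁻ ω, g1 (ω (k + 1)) ∂ law l z) + (∫⁻ ω, g2 (ω k) ∂ law l z)
      ≤ (∫⁻ ω, g1 (ω k) ∂ law l z) + (∫⁻ ω, g3 (ω k) ∂ law l z) := by
  intro k
  induction k with
  | zero =>
    intro l z
    rw [lint_eval_succ hlaw hg1 0 l z, lint_eval_zero hPbarm hlaw hg2 l z,
      lint_eval_zero hPbarm hlaw hg1 l z, lint_eval_zero hPbarm hlaw hg3 l z,
      lintegral_congr fun z' => lint_eval_zero hPbarm hlaw hg1 (l + 1) z']
    exact hstep l z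
  | succ k ih =>
    intro l z
    rw [lint_eval_succ hlaw hg1 (k + 1) l z, lint_eval_succ hlaw hg2 k l z,
      lint_eval_succ hlaw hg1 k l z, lint_eval_succ hlaw hg3 k l z,
      ← lintegral_add_left (measurable_lintEval hlaw hg1 (k + 1) (l + 1)),
      ← lintegral_add_left (measurable_lintEval hlaw hg1 k (l + 1))]
    exact lintegral_mono fun z' => ih (l + 1) z'

private lemma chain_fin {Pbar : ℕ → Kernel (X × Θ) (X × Θ)}
    (hPbarm : ∀ n, IsMarkovKernel (Pbar n))
    {law : ℕ → X × Θ → Measure (ℕ → X × Θ)} (hlaw : IsAdaptiveLaw Pbar law)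
    {g1 g2 g3 : X × Θ → ℝ≥0∞}
    (hg1 : Measurable g1) (hg2 : Measurable g2) (hg3 : Measurable g3)
    (hstep : ∀ l z, (∫⁻ z', g1 z' ∂ (Pbar l z)) + g2 z ≤ g1 z + g3 z)
    (hg1fin : ∀ z, g1 z ≠ ⊤) {K : ℝ≥0∞} (hK : K ≠ ⊤) (hg3bd : ∀ z, g3 z ≤ K) :
    ∀ k l z, (∫⁻ ω, g1 (ω k) ∂ law l z) ≠ ⊤ := by
  intro k
  induction k with
  | zero =>
    intro l z
    rw [lint_eval_zero hPbarm hlaw hg1 l z]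
    exact hg1fin z
  | succ k ih =>
    intro l z
    haveI := hlaw.prob l z
    have h1 : (∫⁻ ω, g1 (ω (k + 1)) ∂ law l z)
        ≤ (∫⁻ ω, g1 (ω k) ∂ law l z) + (∫⁻ ω, g3 (ω k) ∂ law l z) :=
      le_trans (self_le_add_right _ _) (chain_drift hPbarm hlaw hg1 hg2 hg3 hstep k l z)
    have h2 : (∫⁻ ω, g3 (ω k) ∂ law l z) ≤ K := by
      calc (∫⁻ ω, g3 (ω k) ∂ law l z) ≤ ∫⁻ _, K ∂ law l z :=
            lintegral_mono fun ω => hg3bd _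
        _ = K := by simp
    exact ne_top_of_le_ne_top (ENNReal.add_ne_top.mpr ⟨ih l z, hK⟩)
      (le_trans h1 (add_le_add le_rfl h2))

private lemma lint_fst {P : Θ → Kernel X X} {Pbar : ℕ → Kernel (X × Θ) (X × Θ)}
    (hcompat : Compat P Pbar) {g : X → ℝ≥0∞} (hg : Measurable g) (l : ℕ) (x : X) (θ : Θ) :
    ∫⁻ z', g z'.1 ∂ (Pbar l (x, θ)) = ∫⁻ y, g y ∂ (P θ x) := by
  have hmap : (Pbar l (x, θ)).map Prod.fst = P θ x := by
    ext A hA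
    rw [Measure.map_apply measurable_fst hA]
    have hpre : (Prod.fst ⁻¹' A : Set (X × Θ)) = A ×ˢ (univ : Set Θ) := by ext z; simp
    rw [hpre, hcompat l x θ A hA]
  rw [← hmap, lintegral_map hg measurable_fst]

end Chain

/-- Telescoping lemma in `ℝ≥0∞`. -/
private lemma teles {a b2 b3 : ℕ → ℝ≥0∞} (ha : ∀ k, a k ≠ ⊤)
    (h : ∀ k, a (k + 1) + b2 k ≤ a k + b3 k)
    {r : ℕ → ℝ} (hrdec : Antitone r) (n : ℕ) :
    ∀ N, n ≤ N →
      (∑ k ∈ Finset.Ico n N, ENNReal.ofReal (r (k + 1)) * b2 k) + ENNReal.ofReal (r N) * a N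
        ≤ ENNReal.ofReal (r n) * a n
            + ∑ k ∈ Finset.Ico n N, ENNReal.ofReal (r (k + 1)) * b3 k := by
  refine Nat.le_induction ?_ ?_
  · simp [Finset.Ico_self]
  · intro N hN ih
    rw [Finset.sum_Ico_succ_top hN, Finset.sum_Ico_succ_top hN]
    have hstep : ENNReal.ofReal (r (N + 1)) * a (N + 1) + ENNReal.ofReal (r (N + 1)) * b2 N
        ≤ ENNReal.ofReal (r N) * a N + ENNReal.ofReal (r (N + 1)) * b3 N := by
      calc ENNReal.ofReal (r (N + 1)) * a (N + 1) + ENNReal.ofReal (r (N + 1)) * b2 N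
          = ENNReal.ofReal (r (N + 1)) * (a (N + 1) + b2 N) := by ring
        _ ≤ ENNReal.ofReal (r (N + 1)) * (a N + b3 N) := mul_le_mul_right (h N) _
        _ = ENNReal.ofReal (r (N + 1)) * a N + ENNReal.ofReal (r (N + 1)) * b3 N := by ring
        _ ≤ ENNReal.ofReal (r N) * a N + ENNReal.ofReal (r (N + 1)) * b3 N :=
            add_le_add (mul_le_mul_left
              (ENNReal.ofReal_le_ofReal (hrdec (Nat.le_succ N))) _) le_rfl
    have hfin : ENNReal.ofReal (r N) * a N ≠ ⊤ :=
      ENNReal.mul_ne_top ENNReal.ofReal_ne_top (ha N)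
    rw [← ENNReal.add_le_add_iff_right hfin]
    calc ((∑ k ∈ Finset.Ico n N, ENNReal.ofReal (r (k + 1)) * b2 k)
            + ENNReal.ofReal (r (N + 1)) * b2 N + ENNReal.ofReal (r (N + 1)) * a (N + 1))
          + ENNReal.ofReal (r N) * a N
        = ((∑ k ∈ Finset.Ico n N, ENNReal.ofReal (r (k + 1)) * b2 k)
            + ENNReal.ofReal (r N) * a N)
          + (ENNReal.ofReal (r (N + 1)) * a (N + 1) + ENNReal.ofReal (r (N + 1)) * b2 N) := by
          ring
      _ ≤ (ENNReal.ofReal (r n) * a n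
            + ∑ k ∈ Finset.Ico n N, ENNReal.ofReal (r (k + 1)) * b3 k)
          + (ENNReal.ofReal (r N) * a N + ENNReal.ofReal (r (N + 1)) * b3 N) :=
          add_le_add ih hstep
      _ = (ENNReal.ofReal (r n) * a n
            + ((∑ k ∈ Finset.Ico n N, ENNReal.ofReal (r (k + 1)) * b3 k)
              + ENNReal.ofReal (r (N + 1)) * b3 N))
          + ENNReal.ofReal (r N) * a N := by ring

/-- Summation of the telescoped bound against the weights `r`. -/
private lemma final_bound {a w i : ℕ → ℝ≥0∞} (ha : ∀ k, a k ≠ ⊤) {cc K : ℝ≥0∞}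
    (hdr : ∀ k, a (k + 1) + cc * w k ≤ a k + K * i k)
    {r : ℕ → ℝ} (hrdec : Antitone r) (n : ℕ) :
    cc * ∑' k : ℕ, (if n ≤ k then ENNReal.ofReal (r (k + 1)) * w k else 0)
      ≤ ENNReal.ofReal (r n) * a n
        + K * ∑' k : ℕ, (if n ≤ k then ENNReal.ofReal (r (k + 1)) * i k else 0) := by
  rw [ENNReal.tsum_eq_iSup_nat, ENNReal.mul_iSup]
  refine iSup_le fun N => ?_
  set M := max n N with hM
  have hsub : (∑ k ∈ Finset.range N, if n ≤ k then ENNReal.ofReal (r (k + 1)) * w k else 0)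
      ≤ ∑ k ∈ Finset.Ico n M, ENNReal.ofReal (r (k + 1)) * w k := by
    rw [← Finset.sum_filter]
    refine Finset.sum_le_sum_of_subset ?_
    intro k hk
    simp only [Finset.mem_filter, Finset.mem_range, Finset.mem_Ico] at hk ⊢
    exact ⟨hk.2, lt_of_lt_of_le hk.1 (le_max_right n N)⟩
  have hteles := teles (b2 := fun k => cc * w k) (b3 := fun k => K * i k)
    ha hdr hrdec n M (le_max_left n N)
  calc cc * (∑ k ∈ Finset.range N, if n ≤ k then ENNReal.ofReal (r (k + 1)) * w k else 0)
      ≤ cc * ∑ k ∈ Finset.Ico n M, ENNReal.ofReal (r (k + 1)) * w k :=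
        mul_le_mul_right hsub _
    _ = ∑ k ∈ Finset.Ico n M, ENNReal.ofReal (r (k + 1)) * (cc * w k) := by
        rw [Finset.mul_sum]
        exact Finset.sum_congr rfl fun k _ => by ring
    _ ≤ ENNReal.ofReal (r n) * a n
          + ∑ k ∈ Finset.Ico n M, ENNReal.ofReal (r (k + 1)) * (K * i k) :=
        le_trans (self_le_add_right _ _) hteles
    _ ≤ ENNReal.ofReal (r n) * a n
          + K * ∑' k : ℕ, (if n ≤ k then ENNReal.ofReal (r (k + 1)) * i k else 0) := by
        refine add_le_add le_rfl ?_
        calc ∑ k ∈ Finset.Ico n M, ENNReal.ofReal (r (k + 1)) * (K * i k)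
            = ∑ k ∈ Finset.Ico n M, K * (ENNReal.ofReal (r (k + 1)) * i k) :=
              Finset.sum_congr rfl fun k _ => by ring
          _ = K * ∑ k ∈ Finset.Ico n M, ENNReal.ofReal (r (k + 1)) * i k :=
              (Finset.mul_sum _ _ _).symm
          _ = K * ∑ k ∈ Finset.Ico n M,
                (if n ≤ k then ENNReal.ofReal (r (k + 1)) * i k else 0) := by
              congr 1
              exact Finset.sum_congr rfl fun k hk => (if_pos (Finset.mem_Ico.mp hk).1).symm
          _ ≤ K * ∑' k : ℕ, (if n ≤ k then ENNReal.ofReal (r (k + 1)) * i k else 0) :=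
              mul_le_mul_right (ENNReal.sum_le_tsum _) _

/-- Jensen-type bound: `∫ V^β ≤ u^β` when `∫ V ≤ u`, for `0 ≤ β ≤ 1` and `V ≥ 1`. -/
private lemma jensen_rpow {X : Type*} [MeasurableSpace X] (μ : Measure X)
    [IsProbabilityMeasure μ] {V : X → ℝ} (hVmeas : Measurable V) (hV1 : ∀ x, 1 ≤ V x)
    {β : ℝ} (hβ0 : 0 ≤ β) (hβ1 : β ≤ 1) {u : ℝ}
    (hdr : (∫⁻ y, ENNReal.ofReal (V y) ∂μ) ≤ ENNReal.ofReal u) :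
    1 ≤ u ∧ (∫⁻ y, ENNReal.ofReal (V y ^ β) ∂μ) ≤ ENNReal.ofReal (u ^ β) := by
  have hm1 : (1 : ℝ≥0∞) ≤ ∫⁻ y, ENNReal.ofReal (V y) ∂μ := by
    calc (1 : ℝ≥0∞) = ∫⁻ _, 1 ∂μ := by simp
      _ ≤ _ := lintegral_mono fun y => ENNReal.one_le_ofReal.mpr (hV1 y)
  have hu1 : 1 ≤ u := ENNReal.one_le_ofReal.mp (hm1.trans hdr)
  refine ⟨hu1, ?_⟩
  set m : ℝ≥0∞ := ∫⁻ y, ENNReal.ofReal (V y) ∂μ with hm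
  have hmtop : m ≠ ⊤ := (lt_of_le_of_lt hdr ENNReal.ofReal_lt_top).ne
  set t : ℝ := m.toReal with htdef
  have ht1 : 1 ≤ t := by
    have := ENNReal.toReal_mono hmtop hm1
    simpa using this
  have ht0 : (0 : ℝ) < t := lt_of_lt_of_le one_pos ht1
  have htβ : 0 ≤ t ^ β := Real.rpow_nonneg ht0.le β
  have htβ1 : 0 ≤ t ^ (β - 1) := Real.rpow_nonneg ht0.le _
  have htu : t ≤ u := by
    have := ENNReal.toReal_mono ENNReal.ofReal_ne_top hdr
    rwa [ENNReal.toReal_ofReal (by linarith)] at this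
  have key : (∫⁻ y, ENNReal.ofReal (V y ^ β) ∂μ) ≤ ENNReal.ofReal (t ^ β) := by
    calc ∫⁻ y, ENNReal.ofReal (V y ^ β) ∂μ
        ≤ ∫⁻ y, (ENNReal.ofReal ((1 - β) * t ^ β)
            + ENNReal.ofReal (β * t ^ (β - 1)) * ENNReal.ofReal (V y)) ∂μ := by
          refine lintegral_mono fun y => ?_
          have hVy : (0 : ℝ) ≤ V y := le_trans zero_le_one (hV1 y)
          calc ENNReal.ofReal (V y ^ β)
              ≤ ENNReal.ofReal ((1 - β) * t ^ β + β * t ^ (β - 1) * V y) :=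
                ENNReal.ofReal_le_ofReal (tang hVy ht1 hβ0 hβ1)
            _ = _ := by
                rw [ENNReal.ofReal_add (mul_nonneg (by linarith) htβ)
                    (mul_nonneg (mul_nonneg hβ0 htβ1) hVy),
                  ENNReal.ofReal_mul (mul_nonneg hβ0 htβ1)]
      _ = ENNReal.ofReal ((1 - β) * t ^ β) + ENNReal.ofReal (β * t ^ (β - 1)) * m := by
          rw [lintegral_add_left measurable_const,
            lintegral_const_mul _ hVmeas.ennreal_ofReal, lintegral_const, measure_univ,
            mul_one]
      _ = ENNReal.ofReal ((1 - β) * t ^ β)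
            + ENNReal.ofReal (β * t ^ (β - 1)) * ENNReal.ofReal t := by
          rw [← ENNReal.ofReal_toReal hmtop]
      _ = ENNReal.ofReal ((1 - β) * t ^ β + β * t ^ (β - 1) * t) := by
          rw [← ENNReal.ofReal_mul (mul_nonneg hβ0 htβ1),
            ← ENNReal.ofReal_add (mul_nonneg (by linarith) htβ)
              (mul_nonneg (mul_nonneg hβ0 htβ1) ht0.le)]
      _ = ENNReal.ofReal (t ^ β) := by
          congr 1
          have ht : t ^ (β - 1) * t = t ^ β := by
            rw [Real.rpow_sub ht0, Real.rpow_one]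
            field_simp
          rw [mul_assoc, ht]; ring
  exact key.trans (ENNReal.ofReal_le_ofReal (Real.rpow_le_rpow (by linarith) htu hβ0))

/-- Proposition 4.6: weighted tail moment bound under the drift condition. -/
theorem weighted_tail_bound
    {X Θ : Type*} [MeasurableSpace X] [MeasurableSpace Θ]
    (P : Θ → Kernel X X) (hPm : ∀ θ, IsMarkovKernel (P θ))
    (hPθmeas : ∀ (x : X) (A : Set X), MeasurableSet A → Measurable fun θ => P θ x A)
    (Pbar : ℕ → Kernel (X × Θ) (X × Θ)) (hPbarm : ∀ n, IsMarkovKernel (Pbar n))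
    (hcompat : Compat P Pbar)
    (law : ℕ → X × Θ → Measure (ℕ → X × Θ)) (hlaw : IsAdaptiveLaw Pbar law)
    (V : X → ℝ) (hVmeas : Measurable V) (hV1 : ∀ x, 1 ≤ V x)
    (C : Set X) (hCmeas : MeasurableSet C)
    (α b c : ℝ) (hα0 : 0 < α) (hα1 : α ≤ 1) (hb : 0 < b) (hc : 0 < c)
    (hdrift : ∀ (θ : Θ) (x : X),
        (∫⁻ y, ENNReal.ofReal (V y) ∂(P θ x)) ≤
          ENNReal.ofReal (V x - c * V x ^ (1 - α) + b * C.indicator (fun _ => (1 : ℝ)) x))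
    (r : ℕ → ℝ) (hrpos : ∀ n, 0 < r n) (hrdec : Antitone r) :
    ∃ bb : ℝ, ∀ (l : ℕ) (x : X) (θ : Θ) (β : ℝ), 0 ≤ β → β ≤ 1 → ∀ n : ℕ,
      ENNReal.ofReal (β * c) *
        (∫⁻ ω, ∑' k : ℕ, (if n ≤ k then
            ENNReal.ofReal (r (k + 1) * V ((ω k).1) ^ (β - α)) else 0) ∂(law l (x, θ))) ≤
      ENNReal.ofReal (r n) *
          (∫⁻ ω, ENNReal.ofReal (V ((ω n).1) ^ β) ∂(law l (x, θ))) +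
        ENNReal.ofReal bb *
          ∫⁻ ω, ∑' k : ℕ, (if n ≤ k ∧ (ω k).1 ∈ C then
            ENNReal.ofReal (r (k + 1)) else 0) ∂(law l (x, θ)) := by
  refine ⟨max 1 b + (c ^ (1 / α) + b) + c * (c ^ (1 / α) + 1), ?_⟩
  set BB : ℝ := max 1 b + (c ^ (1 / α) + b) + c * (c ^ (1 / α) + 1) with hBBdef
  have hBB0 : 0 ≤ BB := by
    rw [hBBdef]
    have h1 : (0 : ℝ) ≤ max 1 b := le_trans zero_le_one (le_max_left 1 b)
    have h2 : (0 : ℝ) < c ^ (1 / α) := Real.rpow_pos_of_pos hc _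
    nlinarith
  intro l x θ β hβ0 hβ1 n
  -- measurability facts
  have hmV : Measurable fun y : X => V y ^ β := by measurability
  have hmVa : Measurable fun y : X => V y ^ (β - α) := by measurability
  have hg1 : Measurable fun z : X × Θ => ENNReal.ofReal (V z.1 ^ β) :=
    (hmV.comp measurable_fst).ennreal_ofReal
  have hg2' : Measurable fun z : X × Θ => ENNReal.ofReal (V z.1 ^ (β - α)) :=
    (hmVa.comp measurable_fst).ennreal_ofReal
  have hg2 : Measurable fun z : X × Θ =>
      ENNReal.ofReal (β * c) * ENNReal.ofReal (V z.1 ^ (β - α)) := hg2'.const_mul _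
  have hgind : Measurable fun z : X × Θ => C.indicator (fun _ => (1 : ℝ≥0∞)) z.1 :=
    (measurable_const.indicator hCmeas).comp measurable_fst
  have hg3 : Measurable fun z : X × Θ =>
      ENNReal.ofReal BB * C.indicator (fun _ => (1 : ℝ≥0∞)) z.1 := hgind.const_mul _
  -- pointwise (one-step) drift inequality at level β
  have hstep : ∀ l' (z : X × Θ),
      (∫⁻ z', ENNReal.ofReal (V z'.1 ^ β) ∂ (Pbar l' z))
          + ENNReal.ofReal (β * c) * ENNReal.ofReal (V z.1 ^ (β - α))
        ≤ ENNReal.ofReal (V z.1 ^ β)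
          + ENNReal.ofReal BB * C.indicator (fun _ => (1 : ℝ≥0∞)) z.1 := by
    rintro l' ⟨x', θ'⟩
    have hfst : (∫⁻ z', ENNReal.ofReal (V z'.1 ^ β) ∂ (Pbar l' (x', θ')))
        = ∫⁻ y, ENNReal.ofReal (V y ^ β) ∂ (P θ' x') :=
      lint_fst (g := fun y => ENNReal.ofReal (V y ^ β)) hcompat
        hmV.ennreal_ofReal l' x' θ'
    rw [hfst]
    haveI := hPm θ'
    have he : C.indicator (fun _ => (1 : ℝ)) x' = 0
        ∨ C.indicator (fun _ => (1 : ℝ)) x' = 1 := by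
      by_cases hx : x' ∈ C
      · right; simp [Set.indicator_of_mem hx]
      · left; simp [Set.indicator_of_notMem hx]
    obtain ⟨hu1, hjen⟩ := jensen_rpow (P θ' x') hVmeas hV1 hβ0 hβ1 (hdrift θ' x')
    have hA := lemA hα0 hα1 hb hc hβ0 hβ1 (hV1 x') he hu1
    have hVx0 : (0 : ℝ) ≤ V x' := le_trans zero_le_one (hV1 x')
    have hind0 : (0 : ℝ) ≤ C.indicator (fun _ => (1 : ℝ)) x' := by
      rcases he with h | h <;> rw [h] <;> norm_num
    have hu0 : (0 : ℝ)
        ≤ V x' - c * V x' ^ (1 - α) + b * C.indicator (fun _ => (1 : ℝ)) x' := by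
      linarith
    calc (∫⁻ y, ENNReal.ofReal (V y ^ β) ∂ (P θ' x'))
          + ENNReal.ofReal (β * c) * ENNReal.ofReal (V x' ^ (β - α))
        ≤ ENNReal.ofReal ((V x' - c * V x' ^ (1 - α)
              + b * C.indicator (fun _ => (1 : ℝ)) x') ^ β)
            + ENNReal.ofReal (β * c * V x' ^ (β - α)) := by
          refine add_le_add hjen (le_of_eq ?_)
          rw [← ENNReal.ofReal_mul (mul_nonneg hβ0 hc.le)]
      _ = ENNReal.ofReal ((V x' - c * V x' ^ (1 - α)
              + b * C.indicator (fun _ => (1 : ℝ)) x') ^ β + β * c * V x' ^ (β - α)) := by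
          rw [← ENNReal.ofReal_add (Real.rpow_nonneg hu0 β)
            (mul_nonneg (mul_nonneg hβ0 hc.le) (Real.rpow_nonneg hVx0 _))]
      _ ≤ ENNReal.ofReal (V x' ^ β + BB * C.indicator (fun _ => (1 : ℝ)) x') := by
          apply ENNReal.ofReal_le_ofReal
          rw [hBBdef]
          exact hA
      _ = ENNReal.ofReal (V x' ^ β)
            + ENNReal.ofReal BB * C.indicator (fun _ => (1 : ℝ≥0∞)) x' := by
          rw [ENNReal.ofReal_add (Real.rpow_nonneg hVx0 β) (mul_nonneg hBB0 hind0)]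
          congr 1
          by_cases hx : x' ∈ C
          · simp [Set.indicator_of_mem hx]
          · simp [Set.indicator_of_notMem hx]
  -- the drift inequality along the chain
  have hdriftk : ∀ k,
      (∫⁻ ω, ENNReal.ofReal (V ((ω (k + 1)).1) ^ β) ∂ law l (x, θ))
          + ENNReal.ofReal (β * c)
            * (∫⁻ ω, ENNReal.ofReal (V ((ω k).1) ^ (β - α)) ∂ law l (x, θ))
        ≤ (∫⁻ ω, ENNReal.ofReal (V ((ω k).1) ^ β) ∂ law l (x, θ))
          + ENNReal.ofReal BB
            * (∫⁻ ω, C.indicator (fun _ => (1 : ℝ≥0∞)) ((ω k).1) ∂ law l (x, θ)) := by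
    intro k
    have h' : (∫⁻ ω, ENNReal.ofReal (V ((ω (k + 1)).1) ^ β) ∂ law l (x, θ))
        + (∫⁻ ω, ENNReal.ofReal (β * c)
            * ENNReal.ofReal (V ((ω k).1) ^ (β - α)) ∂ law l (x, θ))
      ≤ (∫⁻ ω, ENNReal.ofReal (V ((ω k).1) ^ β) ∂ law l (x, θ))
        + (∫⁻ ω, ENNReal.ofReal BB
            * C.indicator (fun _ => (1 : ℝ≥0∞)) ((ω k).1) ∂ law l (x, θ)) :=
      chain_drift hPbarm hlaw hg1 hg2 hg3 hstep k l (x, θ)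
    rwa [lintegral_const_mul (μ := law l (x, θ))
        (f := fun ω => ENNReal.ofReal (V ((ω k).1) ^ (β - α)))
        (ENNReal.ofReal (β * c)) (by exact hg2'.comp (measurable_pi_apply k)),
      lintegral_const_mul (μ := law l (x, θ))
        (f := fun ω => C.indicator (fun _ => (1 : ℝ≥0∞)) ((ω k).1))
        (ENNReal.ofReal BB) (by exact hgind.comp (measurable_pi_apply k))] at h'
  -- finiteness along the chain
  have hfin : ∀ k, (∫⁻ ω, ENNReal.ofReal (V ((ω k).1) ^ β) ∂ law l (x, θ)) ≠ ⊤ := by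
    intro k
    exact chain_fin hPbarm hlaw hg1 hg2 hg3 hstep (fun z => ENNReal.ofReal_ne_top)
      (K := ENNReal.ofReal BB) ENNReal.ofReal_ne_top
      (fun z => by
        by_cases hz : z.1 ∈ C
        · simp [Set.indicator_of_mem hz]
        · simp [Set.indicator_of_notMem hz])
      k l (x, θ)
  -- rewrite both path integrals of tsums as tsums of integrals
  have hL : (∫⁻ ω, ∑' k : ℕ, (if n ≤ k then
          ENNReal.ofReal (r (k + 1) * V ((ω k).1) ^ (β - α)) else 0) ∂ (law l (x, θ)))
      = ∑' k : ℕ, (if n ≤ k then ENNReal.ofReal (r (k + 1))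
          * (∫⁻ ω, ENNReal.ofReal (V ((ω k).1) ^ (β - α)) ∂ law l (x, θ)) else 0) := by
    rw [lintegral_tsum (fun k => ?_)]
    · refine tsum_congr fun k => ?_
      by_cases hk : n ≤ k
      · simp only [hk, if_true]
        rw [← lintegral_const_mul (μ := law l (x, θ))
          (f := fun ω => ENNReal.ofReal (V ((ω k).1) ^ (β - α)))
          (ENNReal.ofReal (r (k + 1))) (by exact hg2'.comp (measurable_pi_apply k))]
        exact lintegral_congr fun ω => ENNReal.ofReal_mul (hrpos (k + 1)).le
      · simp [hk]
    · by_cases hk : n ≤ k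
      · simp only [hk, if_true]
        exact (((hmVa.comp (measurable_fst.comp
          (measurable_pi_apply k))).const_mul (r (k + 1))).ennreal_ofReal).aemeasurable
      · simp only [hk, if_false]
        exact aemeasurable_const
  have hR : (∫⁻ ω, ∑' k : ℕ, (if n ≤ k ∧ (ω k).1 ∈ C then
          ENNReal.ofReal (r (k + 1)) else 0) ∂ (law l (x, θ)))
      = ∑' k : ℕ, (if n ≤ k then ENNReal.ofReal (r (k + 1))
          * (∫⁻ ω, C.indicator (fun _ => (1 : ℝ≥0∞)) ((ω k).1) ∂ law l (x, θ)) else 0) := by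
    have hmeasset : ∀ k : ℕ, MeasurableSet {ω : ℕ → X × Θ | (ω k).1 ∈ C} :=
      fun k => (measurable_fst.comp (measurable_pi_apply k)) hCmeas
    rw [lintegral_tsum (fun k => ?_)]
    · refine tsum_congr fun k => ?_
      by_cases hk : n ≤ k
      · simp only [hk, true_and, if_true]
        rw [← lintegral_const_mul (μ := law l (x, θ))
          (f := fun ω => C.indicator (fun _ => (1 : ℝ≥0∞)) ((ω k).1))
          (ENNReal.ofReal (r (k + 1))) (by exact hgind.comp (measurable_pi_apply k))]
        refine lintegral_congr fun ω => ?_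
        by_cases hC : (ω k).1 ∈ C
        · simp [hC, Set.indicator_of_mem hC]
        · simp [hC, Set.indicator_of_notMem hC]
      · simp [hk]
    · by_cases hk : n ≤ k
      · simp only [hk, true_and]
        exact (Measurable.ite (hmeasset k) measurable_const measurable_const).aemeasurable
      · simp only [hk, false_and, if_false]
        exact aemeasurable_const
  rw [hL, hR]
  exact final_bound hfin hdriftk hrdec n

end AdaptiveMCMC
end
end

section
/- Assume there exist a measurable set C ⊆ X, functions W : X → (0,∞) and a non-decreasing r : ℕ → (0,∞) such that: P_θW ≤ W on the complement of C for every θ ∈ Θ; sup_{(x,θ)∈C×Θ} P_θW(x) < ∞; sup_{l≥0} sup_{(x,θ)∈C×Θ} E^{(l)}_{x,θ}[r(τ_C)] < ∞; and Σ_k 1/r(k) < ∞. Then for any probability distributions ξ1 on X and ξ2 on Θ, the sequence {W(X_n) : n ≥ 0} is bounded in probability under P_{ξ1,ξ2}; that is, for every ε > 0 there exist M and N such that P_{ξ1,ξ2}(W(X_n) ≥ M') ≤ ε for all M' ≥ M and n ≥ N. -/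
open MeasureTheory ProbabilityTheory Filter Set
open scoped ENNReal NNReal Classical

noncomputable section

namespace AdaptiveMCMC

section Auxiliary

variable {X Θ : Type*} [MeasurableSpace X] [MeasurableSpace Θ]

/-- Shift a path by `j`. -/
def shift {α : Type*} (j : ℕ) (ω : ℕ → α) : ℕ → α := fun n => ω (n + j)

lemma measurable_prepend_s16 {α : Type*} [MeasurableSpace α] (z : α) :
    Measurable (prepend z : (ℕ → α) → ℕ → α) := by
  apply measurable_pi_lambda
  intro n
  cases n with
  | zero => exact measurable_const
  | succ n => exact measurable_pi_apply n

lemma measurable_shift {α : Type*} [MeasurableSpace α] (j : ℕ) :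
    Measurable (shift j : (ℕ → α) → ℕ → α) :=
  measurable_pi_lambda _ fun n => measurable_pi_apply (n + j)

lemma shift_comp_prepend {α : Type*} (z : α) (j : ℕ) :
    (shift (j + 1) : (ℕ → α) → ℕ → α) ∘ prepend z = shift j := by
  funext ω n; rfl

lemma eval_succ_comp_prepend {α : Type*} (z : α) (j : ℕ) :
    (fun ω : ℕ → α => ω (j + 1)) ∘ prepend z = fun ω => ω j := by
  funext ω; rfl

lemma Measure.map_bind' {α β γ : Type*} [MeasurableSpace α] [MeasurableSpace β] [MeasurableSpace γ]
    (m : Measure α) (κ : α → Measure β) (hκ : Measurable κ) (f : β → γ) (hf : Measurable f) :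
    (m.bind κ).map f = m.bind (fun a => (κ a).map f) := by
  have h1 : (m.bind κ).map f = (m.bind κ).bind (fun x => Measure.dirac (f x)) :=
    (Measure.bind_dirac_eq_map _ hf).symm
  rw [h1, Measure.bind_bind (g := fun x => Measure.dirac (f x)) hκ.aemeasurable
    (Measure.measurable_dirac.comp hf).aemeasurable]
  congr 1
  funext a
  exact Measure.bind_dirac_eq_map _ hf

variable {Pbar : ℕ → Kernel (X × Θ) (X × Θ)} {law : ℕ → X × Θ → Measure (ℕ → X × Θ)}

lemma map_eval_zero (hPbarm : ∀ n, IsMarkovKernel (Pbar n)) (hlaw : IsAdaptiveLaw Pbar law)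
    (l : ℕ) (z : X × Θ) : (law l z).map (fun ω => ω 0) = Measure.dirac z := by
  have hκ : Measurable (fun z' => (law (l + 1) z').map (prepend z)) :=
    (Measure.measurable_map _ (measurable_prepend_s16 z)).comp (hlaw.meas (l + 1))
  rw [hlaw.step l z, Measure.map_bind' _ _ hκ _ (measurable_pi_apply 0)]
  have heq : ∀ z' : X × Θ, ((law (l + 1) z').map (prepend z)).map (fun ω => ω 0)
      = Measure.dirac z := by
    intro z'
    haveI := hlaw.prob (l + 1) z'
    rw [Measure.map_map (measurable_pi_apply 0) (measurable_prepend_s16 z)]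
    have : ((fun ω : ℕ → X × Θ => ω 0) ∘ prepend z) = fun _ => z := by funext ω; rfl
    rw [this, Measure.map_const, measure_univ, one_smul]
  simp_rw [heq]
  haveI := hPbarm l
  rw [Measure.bind_const, measure_univ, one_smul]

lemma law_eval_zero_mem (hPbarm : ∀ n, IsMarkovKernel (Pbar n)) (hlaw : IsAdaptiveLaw Pbar law)
    (l : ℕ) (z : X × Θ) {S : Set (X × Θ)} (hS : MeasurableSet S) :
    law l z {ω | ω 0 ∈ S} = S.indicator 1 z := by
  have h1 : {ω : ℕ → X × Θ | ω 0 ∈ S} = (fun ω : ℕ → X × Θ => ω 0) ⁻¹' S := rfl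
  rw [h1, ← Measure.map_apply (measurable_pi_apply 0) hS, map_eval_zero hPbarm hlaw,
    Measure.dirac_apply' _ hS]

lemma lintegral_eval_zero (hPbarm : ∀ n, IsMarkovKernel (Pbar n)) (hlaw : IsAdaptiveLaw Pbar law)
    (l : ℕ) (z : X × Θ) (g : X × Θ → ℝ≥0∞) (hg : Measurable g) :
    ∫⁻ ω, g (ω 0) ∂(law l z) = g z := by
  rw [← lintegral_map hg (measurable_pi_apply 0), map_eval_zero hPbarm hlaw,
    lintegral_dirac' _ hg]

lemma map_shift_law (hPbarm : ∀ n, IsMarkovKernel (Pbar n)) (hlaw : IsAdaptiveLaw Pbar law) :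
    ∀ (j l : ℕ) (z : X × Θ),
      (law l z).map (shift j) = ((law l z).map (fun ω => ω j)).bind (law (l + j)) := by
  intro j
  induction j with
  | zero =>
    intro l z
    have h0 : (shift 0 : (ℕ → X × Θ) → ℕ → X × Θ) = id := by funext ω n; rfl
    rw [h0, Measure.map_id, map_eval_zero hPbarm hlaw, Measure.dirac_bind (hlaw.meas (l + 0))]
    rfl
  | succ j ih =>
    intro l z
    have hκ : Measurable (fun z' => (law (l + 1) z').map (prepend z)) :=
      (Measure.measurable_map _ (measurable_prepend_s16 z)).comp (hlaw.meas (l + 1))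
    have hκ' : Measurable (fun z' => (law (l + 1) z').map (fun ω => ω j)) :=
      (Measure.measurable_map _ (measurable_pi_apply j)).comp (hlaw.meas (l + 1))
    rw [hlaw.step l z, Measure.map_bind' _ _ hκ _ (measurable_shift (j + 1)),
      Measure.map_bind' _ _ hκ _ (measurable_pi_apply (j + 1))]
    have heq1 : ∀ z' : X × Θ, ((law (l + 1) z').map (prepend z)).map (shift (j + 1))
        = ((law (l + 1) z').map (fun ω => ω j)).bind (law (l + 1 + j)) := by
      intro z'
      rw [Measure.map_map (measurable_shift (j + 1)) (measurable_prepend_s16 z),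
        shift_comp_prepend, ih (l + 1) z']
    have heq2 : ∀ z' : X × Θ, ((law (l + 1) z').map (prepend z)).map (fun ω => ω (j + 1))
        = (law (l + 1) z').map (fun ω => ω j) := by
      intro z'
      rw [Measure.map_map (measurable_pi_apply (j + 1)) (measurable_prepend_s16 z),
        eval_succ_comp_prepend]
    simp_rw [heq1, heq2]
    have hl : l + 1 + j = l + (j + 1) := by omega
    rw [← hl]
    exact (Measure.bind_bind hκ'.aemeasurable (hlaw.meas (l + 1 + j)).aemeasurable).symm

/-- The set of paths avoiding `C` (in the first coordinate) at all times in `[a, b]`. -/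
def noHitSet (C : Set X) (a b : ℕ) : Set (ℕ → X × Θ) :=
  {ω | ∀ k, a ≤ k → k ≤ b → (ω k).1 ∉ C}

lemma measurable_noHitSet {C : Set X} (hC : MeasurableSet C) (a b : ℕ) :
    MeasurableSet (noHitSet (Θ := Θ) C a b) := by
  have h1 : noHitSet (Θ := Θ) C a b
      = ⋂ k ∈ Set.Icc a b, (fun ω : ℕ → X × Θ => (ω k).1) ⁻¹' Cᶜ := by
    ext ω
    simp only [noHitSet, Set.mem_setOf_eq, Set.mem_iInter, Set.mem_Icc, Set.mem_preimage,
      Set.mem_compl_iff]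
    constructor
    · intro h k hk; exact h k hk.1 hk.2
    · intro h k hk1 hk2; exact h k ⟨hk1, hk2⟩
  rw [h1]
  exact MeasurableSet.biInter (Set.to_countable _)
    fun k _ => ((measurable_pi_apply k).fst) hC.compl

lemma map_fst_Pbar {P : Θ → Kernel X X} (hcompat : Compat P Pbar) (n : ℕ) (x : X) (θ : Θ) :
    (Pbar n (x, θ)).map Prod.fst = P θ x := by
  ext A hA
  rw [Measure.map_apply measurable_fst hA, ← hcompat n x θ A hA]
  congr 1
  ext p
  simp [Set.mem_prod]

lemma lintegral_fst_Pbar {P : Θ → Kernel X X} (hcompat : Compat P Pbar) (n : ℕ) (z : X × Θ)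
    (g : X → ℝ≥0∞) (hg : Measurable g) :
    ∫⁻ z', g z'.1 ∂(Pbar n z) = ∫⁻ y, g y ∂(P z.2 z.1) := by
  obtain ⟨x, θ⟩ := z
  rw [← map_fst_Pbar hcompat n x θ, lintegral_map hg measurable_fst]

lemma drift_bound {P : Θ → Kernel X X} (hPbarm : ∀ n, IsMarkovKernel (Pbar n))
    (hlaw : IsAdaptiveLaw Pbar law) (hcompat : Compat P Pbar)
    {C : Set X} (hC : MeasurableSet C) {W : X → ℝ} (hWmeas : Measurable W)
    (hdriftout : ∀ (θ : Θ), ∀ x ∉ C,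
      (∫⁻ y, ENNReal.ofReal (W y) ∂(P θ x)) ≤ ENNReal.ofReal (W x)) :
    ∀ (t l : ℕ) (z : X × Θ),
      ∫⁻ ω, (noHitSet C 1 t).indicator (fun ω => ENNReal.ofReal (W ((ω (t + 1)).1))) ω ∂(law l z)
        ≤ ∫⁻ y, ENNReal.ofReal (W y) ∂(P z.2 z.1) := by
  have hWof : ∀ m : ℕ, Measurable fun ω : ℕ → X × Θ => ENNReal.ofReal (W ((ω m).1)) :=
    fun m => (hWmeas.comp ((measurable_pi_apply m).fst)).ennreal_ofReal
  intro t
  induction t with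
  | zero =>
    intro l z
    have h0 : noHitSet (Θ := Θ) C 1 0 = Set.univ := by
      ext ω
      simp only [noHitSet, Set.mem_setOf_eq, Set.mem_univ, iff_true]
      intro k hk1 hk0; omega
    rw [h0, Set.indicator_univ]
    have hκ : Measurable (fun z' => (law (l + 1) z').map (prepend z)) :=
      (Measure.measurable_map _ (measurable_prepend_s16 z)).comp (hlaw.meas (l + 1))
    rw [hlaw.step l z, Measure.lintegral_bind hκ.aemeasurable (hWof 1).aemeasurable]
    have hinner : ∀ z' : X × Θ,
        ∫⁻ ω, ENNReal.ofReal (W ((ω 1).1)) ∂((law (l + 1) z').map (prepend z))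
          = ENNReal.ofReal (W z'.1) := by
      intro z'
      rw [lintegral_map (hWof 1) (measurable_prepend_s16 z)]
      exact lintegral_eval_zero hPbarm hlaw (l + 1) z' (fun w => ENNReal.ofReal (W w.1))
        ((hWmeas.comp measurable_fst).ennreal_ofReal)
    simp_rw [hinner]
    rw [lintegral_fst_Pbar hcompat l z _ hWmeas.ennreal_ofReal]
  | succ t ih =>
    intro l z
    have hκ : Measurable (fun z' => (law (l + 1) z').map (prepend z)) :=
      (Measure.measurable_map _ (measurable_prepend_s16 z)).comp (hlaw.meas (l + 1))
    have hind : Measurable ((noHitSet C 1 (t + 1)).indicator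
        (fun ω : ℕ → X × Θ => ENNReal.ofReal (W ((ω (t + 2)).1)))) :=
      (hWof (t + 2)).indicator (measurable_noHitSet hC 1 (t + 1))
    rw [hlaw.step l z, Measure.lintegral_bind hκ.aemeasurable hind.aemeasurable]
    have key : ∀ z' : X × Θ,
        (∫⁻ ω, (noHitSet C 1 (t + 1)).indicator
            (fun ω : ℕ → X × Θ => ENNReal.ofReal (W ((ω (t + 2)).1))) ω
          ∂((law (l + 1) z').map (prepend z)))
        ≤ Cᶜ.indicator (fun x => ENNReal.ofReal (W x)) z'.1 := by
      intro z'
      rw [lintegral_map hind (measurable_prepend_s16 z)]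
      have hiff : ∀ ω' : ℕ → X × Θ, prepend z ω' ∈ noHitSet C 1 (t + 1)
          ↔ ((ω' 0).1 ∉ C ∧ ω' ∈ noHitSet C 1 t) := by
        intro ω'
        constructor
        · intro h
          refine ⟨h 1 le_rfl (by omega), fun k hk1 hkt => h (k + 1) (by omega) (by omega)⟩
        · rintro ⟨h0, h⟩ k hk1 hkt
          cases k with
          | zero => omega
          | succ k' =>
            by_cases hk0 : k' = 0
            · subst hk0; exact h0
            · exact h k' (by omega) (by omega)
      have hptw : ∀ ω' : ℕ → X × Θ,
          (noHitSet C 1 (t + 1)).indicator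
            (fun ω : ℕ → X × Θ => ENNReal.ofReal (W ((ω (t + 2)).1))) (prepend z ω')
          = ({ω' : ℕ → X × Θ | (ω' 0).1 ∉ C} ∩ noHitSet C 1 t).indicator
            (fun ω' => ENNReal.ofReal (W ((ω' (t + 1)).1))) ω' := by
        intro ω'
        by_cases hmem : prepend z ω' ∈ noHitSet C 1 (t + 1)
        · have hm2 : ω' ∈ ({ω' : ℕ → X × Θ | (ω' 0).1 ∉ C} ∩ noHitSet C 1 t) :=
            (hiff ω').1 hmem
          rw [Set.indicator_of_mem hmem, Set.indicator_of_mem hm2]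
          rfl
        · have hm2 : ω' ∉ ({ω' : ℕ → X × Θ | (ω' 0).1 ∉ C} ∩ noHitSet C 1 t) :=
            fun hc => hmem ((hiff ω').2 hc)
          rw [Set.indicator_of_notMem hmem, Set.indicator_of_notMem hm2]
      simp_rw [hptw]
      by_cases hz' : z'.1 ∈ C
      · -- the set is null
        have hnull : law (l + 1) z' {ω' : ℕ → X × Θ | ω' 0 ∈ {p : X × Θ | p.1 ∉ C}} = 0 := by
          rw [law_eval_zero_mem hPbarm hlaw (l + 1) z'
            (S := {p : X × Θ | p.1 ∉ C}) (measurable_fst hC.compl)]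
          simp [Set.indicator, hz']
        have hmeas2 : MeasurableSet ({ω' : ℕ → X × Θ | (ω' 0).1 ∉ C} ∩ noHitSet C 1 t) :=
          (((measurable_pi_apply 0).fst) hC.compl).inter (measurable_noHitSet hC 1 t)
        rw [lintegral_indicator hmeas2]
        have hz0 : law (l + 1) z' ({ω' : ℕ → X × Θ | (ω' 0).1 ∉ C} ∩ noHitSet C 1 t) = 0 :=
          measure_mono_null Set.inter_subset_left hnull
        rw [setLIntegral_measure_zero _ _ hz0]
        exact zero_le
      · calc ∫⁻ ω', ({ω' : ℕ → X × Θ | (ω' 0).1 ∉ C} ∩ noHitSet C 1 t).indicator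
              (fun ω' => ENNReal.ofReal (W ((ω' (t + 1)).1))) ω' ∂(law (l + 1) z')
            ≤ ∫⁻ ω', (noHitSet C 1 t).indicator
              (fun ω' => ENNReal.ofReal (W ((ω' (t + 1)).1))) ω' ∂(law (l + 1) z') := by
              apply lintegral_mono
              intro ω'
              exact Set.indicator_le_indicator_of_subset Set.inter_subset_right
                (fun _ => zero_le) ω'
          _ ≤ ∫⁻ y, ENNReal.ofReal (W y) ∂(P z'.2 z'.1) := ih (l + 1) z'
          _ ≤ ENNReal.ofReal (W z'.1) := hdriftout z'.2 z'.1 hz'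
          _ = Cᶜ.indicator (fun x => ENNReal.ofReal (W x)) z'.1 :=
              (Set.indicator_of_mem (Set.mem_compl hz') (fun x => ENNReal.ofReal (W x))).symm
    calc ∫⁻ z', (∫⁻ ω, (noHitSet C 1 (t + 1)).indicator
            (fun ω : ℕ → X × Θ => ENNReal.ofReal (W ((ω (t + 2)).1))) ω
          ∂((law (l + 1) z').map (prepend z))) ∂(Pbar l z)
        ≤ ∫⁻ z', Cᶜ.indicator (fun x => ENNReal.ofReal (W x)) z'.1 ∂(Pbar l z) :=
          lintegral_mono key
      _ ≤ ∫⁻ z', ENNReal.ofReal (W z'.1) ∂(Pbar l z) :=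
          lintegral_mono fun z' => Set.indicator_le_self _ _ _
      _ = ∫⁻ y, ENNReal.ofReal (W y) ∂(P z.2 z.1) :=
          lintegral_fst_Pbar hcompat l z _ hWmeas.ennreal_ofReal

lemma hit_bound {C : Set X} (hC : MeasurableSet C) {r : ℕ → ℝ} (hrmono : Monotone r)
    (m l : ℕ) (z : X × Θ) (hm : 1 ≤ m) :
    ENNReal.ofReal (r m) * law l z (noHitSet C 1 (m - 1))
      ≤ ∫⁻ ω, rEval r (hitTime C ω) ∂(law l z) := by
  rw [← lintegral_indicator_const (measurable_noHitSet hC 1 (m - 1))]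
  apply lintegral_mono
  intro ω
  by_cases hω : ω ∈ noHitSet C 1 (m - 1)
  · rw [Set.indicator_of_mem hω]
    have hτ : (m : ℕ∞) ≤ hitTime C ω := by
      by_contra h
      push_neg at h
      rw [hitTime, iInf_lt_iff] at h
      obtain ⟨⟨k, hk1, hkC⟩, hklt⟩ := h
      have hkm : k < m := by exact_mod_cast hklt
      exact hω k hk1 (by omega) hkC
    rcases eq_or_ne (hitTime C ω) ⊤ with ht | ht
    · simp [rEval, ht]
    · lift hitTime C ω to ℕ using ht with t hteq
      have htm : m ≤ t := by exact_mod_cast hτ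
      simp only [rEval, if_neg (by simp : (t : ℕ∞) ≠ ⊤)]
      simpa using ENNReal.ofReal_le_ofReal (hrmono htm)
  · rw [Set.indicator_of_notMem hω]
    exact zero_le

end Auxiliary

/-- Lemma 4.10: boundedness in probability of `W(X_n)`. -/
theorem bounded_in_probability
    {X Θ : Type*} [MeasurableSpace X] [MeasurableSpace Θ]
    (P : Θ → Kernel X X) (hPm : ∀ θ, IsMarkovKernel (P θ))
    (hPθmeas : ∀ (x : X) (A : Set X), MeasurableSet A → Measurable fun θ => P θ x A)
    (Pbar : ℕ → Kernel (X × Θ) (X × Θ)) (hPbarm : ∀ n, IsMarkovKernel (Pbar n))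
    (hcompat : Compat P Pbar)
    (law : ℕ → X × Θ → Measure (ℕ → X × Θ)) (hlaw : IsAdaptiveLaw Pbar law)
    (C : Set X) (hCmeas : MeasurableSet C)
    (W : X → ℝ) (hWmeas : Measurable W) (hWpos : ∀ x, 0 < W x)
    (r : ℕ → ℝ) (hrpos : ∀ n, 0 < r n) (hrmono : Monotone r)
    (hdriftout : ∀ (θ : Θ), ∀ x ∉ C,
        (∫⁻ y, ENNReal.ofReal (W y) ∂(P θ x)) ≤ ENNReal.ofReal (W x))
    (hsupC : ∃ Mb : ℝ, ∀ (θ : Θ), ∀ x ∈ C,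
        (∫⁻ y, ENNReal.ofReal (W y) ∂(P θ x)) ≤ ENNReal.ofReal Mb)
    (hhit : (⨆ l : ℕ, ⨆ p : {p : X × Θ // p.1 ∈ C},
        ∫⁻ ω, rEval r (hitTime C ω) ∂(law l p.1)) < ⊤)
    (hrsum : Summable fun k => 1 / r k)
    (ξ1 : Measure X) (ξ2 : Measure Θ)
    (hξ1 : IsProbabilityMeasure ξ1) (hξ2 : IsProbabilityMeasure ξ2) :
    ∀ ε : ℝ, 0 < ε → ∃ (M : ℝ) (N : ℕ), ∀ M' : ℝ, M ≤ M' → ∀ n : ℕ, N ≤ n →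
      chainLaw law ξ1 ξ2 {ω | M' ≤ W ((ω n).1)} ≤ ENNReal.ofReal ε := by
  intro ε hε
  obtain ⟨Mb, hMb⟩ := hsupC
  have hε3 : (0:ℝ≥0∞) < ENNReal.ofReal (ε / 3) := ENNReal.ofReal_pos.2 (by linarith)
  -- the uniform bound on expected return times
  set E : ℝ≥0∞ := (⨆ l : ℕ, ⨆ p : {p : X × Θ // p.1 ∈ C},
      ∫⁻ ω, rEval r (hitTime C ω) ∂(law l p.1)) with hEdef
  have hEtop : E ≠ ⊤ := hhit.ne
  have hEle : ∀ (l : ℕ) (z : X × Θ), z.1 ∈ C →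
      ∫⁻ ω, rEval r (hitTime C ω) ∂(law l z) ≤ E := by
    intro l z hz
    calc ∫⁻ ω, rEval r (hitTime C ω) ∂(law l z)
        ≤ ⨆ p : {p : X × Θ // p.1 ∈ C}, ∫⁻ ω, rEval r (hitTime C ω) ∂(law l p.1) :=
          le_iSup (fun p : {p : X × Θ // p.1 ∈ C} =>
            ∫⁻ ω, rEval r (hitTime C ω) ∂(law l p.1)) ⟨z, hz⟩
      _ ≤ E := le_iSup (fun l => ⨆ p : {p : X × Θ // p.1 ∈ C},
            ∫⁻ ω, rEval r (hitTime C ω) ∂(law l p.1)) l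
  -- choose K with small tail mass for the initial distribution
  obtain ⟨K, hK⟩ : ∃ K : ℕ, ξ1 {x | (K : ℝ) ≤ W x} ≤ ENNReal.ofReal (ε / 3) := by
    have hanti : Antitone fun K : ℕ => {x : X | (K : ℝ) ≤ W x} := by
      intro a b hab x hx
      simp only [Set.mem_setOf_eq] at hx ⊢
      exact le_trans (by exact_mod_cast hab) hx
    have hmeas : ∀ K : ℕ, NullMeasurableSet {x : X | (K:ℝ) ≤ W x} ξ1 :=
      fun K => (hWmeas measurableSet_Ici).nullMeasurableSet
    have hiInter : ⋂ K : ℕ, {x : X | (K:ℝ) ≤ W x} = ∅ := by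
      ext x
      simp only [Set.mem_iInter, Set.mem_setOf_eq, Set.mem_empty_iff_false, iff_false,
        not_forall]
      obtain ⟨K, hKx⟩ := exists_nat_gt (W x)
      exact ⟨K, not_le.2 hKx⟩
    have htend := tendsto_measure_iInter_atTop (μ := ξ1) hmeas hanti ⟨0, measure_ne_top _ _⟩
    rw [hiInter, measure_empty] at htend
    obtain ⟨K, hK⟩ := (htend.eventually_lt_const hε3).exists
    exact ⟨K, hK.le⟩
  -- tail of the series
  set fE : ℕ → ℝ≥0∞ := fun m => E / ENNReal.ofReal (r m) with hfEdef
  have hfEne : (∑' m, fE m) ≠ ⊤ := by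
    have h1 : ∀ m : ℕ, fE m = (ENNReal.ofReal (r m))⁻¹ * E := by
      intro m; rw [hfEdef]; exact ENNReal.div_eq_inv_mul
    have h2 : ∀ m : ℕ, (ENNReal.ofReal (r m))⁻¹ = ENNReal.ofReal (1 / r m) := by
      intro m; rw [one_div, ENNReal.ofReal_inv_of_pos (hrpos m)]
    have h3 : (∑' m, fE m) = (∑' m, ENNReal.ofReal (1 / r m)) * E := by
      simp_rw [h1, h2]
      rw [ENNReal.tsum_mul_right]
    rw [h3, ← ENNReal.ofReal_tsum_of_nonneg (fun m => by have := hrpos m; positivity) hrsum]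
    exact ENNReal.mul_ne_top ENNReal.ofReal_ne_top hEtop
  obtain ⟨m0, hm0⟩ : ∃ m0 : ℕ, (∑' k, fE (k + m0)) ≤ ENNReal.ofReal (ε / 3) := by
    obtain ⟨m0, hm0⟩ := ((ENNReal.tendsto_sum_nat_add fE hfEne).eventually_lt_const hε3).exists
    exact ⟨m0, hm0.le⟩
  -- the constant M
  set d : ℝ := max (K : ℝ) Mb + m0 * max Mb 0 with hddef
  have hmax0 : (0:ℝ) ≤ max (K : ℝ) Mb := le_trans (Nat.cast_nonneg K) (le_max_left _ _)
  have hd0 : 0 ≤ d := by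
    have h2 : (0:ℝ) ≤ (m0:ℝ) * max Mb 0 :=
      mul_nonneg (Nat.cast_nonneg m0) (le_max_right _ _)
    rw [hddef]; linarith
  refine ⟨max 1 (3 * d / ε), 1, ?_⟩
  intro M' hM' n hn
  have hM'1 : (1:ℝ) ≤ M' := le_trans (le_max_left _ _) hM'
  have hM'pos : (0:ℝ) < M' := by linarith
  have hM'ne : ENNReal.ofReal M' ≠ 0 := (ENNReal.ofReal_pos.2 hM'pos).ne'
  have hWm : ∀ m : ℕ, Measurable fun ω : ℕ → X × Θ => W ((ω m).1) :=
    fun m => hWmeas.comp ((measurable_pi_apply m).fst)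
  have hAmeas : ∀ m : ℕ, MeasurableSet {ω : ℕ → X × Θ | M' ≤ W ((ω m).1)} :=
    fun m => (hWm m) measurableSet_Ici
  set T : ℕ → Set (ℕ → X × Θ) := fun m =>
    {ω : ℕ → X × Θ | (ω 0).1 ∈ C} ∩ (noHitSet C 1 (m - 1) ∩ {ω | M' ≤ W ((ω m).1)})
    with hTdef
  have hTmeas : ∀ m, MeasurableSet (T m) := fun m =>
    (((measurable_pi_apply 0).fst) hCmeas).inter
      ((measurable_noHitSet hCmeas 1 (m - 1)).inter (hAmeas m))
  -- Markov inequality via the drift bound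
  have markovW : ∀ (m l : ℕ), 1 ≤ m → ∀ z : X × Θ, ∀ S : Set (ℕ → X × Θ),
      MeasurableSet S → S ⊆ noHitSet C 1 (m - 1) ∩ {ω | M' ≤ W ((ω m).1)} →
      law l z S ≤ (∫⁻ y, ENNReal.ofReal (W y) ∂(P z.2 z.1)) / ENNReal.ofReal M' := by
    intro m l hm z S hSmeas hSsub
    rw [ENNReal.le_div_iff_mul_le (Or.inl hM'ne) (Or.inl ENNReal.ofReal_ne_top)]
    have h1 : law l z S * ENNReal.ofReal M'
        ≤ ∫⁻ ω, (noHitSet C 1 (m - 1)).indicator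
            (fun ω => ENNReal.ofReal (W ((ω m).1))) ω ∂(law l z) := by
      rw [mul_comm, ← lintegral_indicator_const hSmeas]
      apply lintegral_mono
      intro ω
      by_cases hω : ω ∈ S
      · rw [Set.indicator_of_mem hω, Set.indicator_of_mem (hSsub hω).1]
        exact ENNReal.ofReal_le_ofReal (hSsub hω).2
      · rw [Set.indicator_of_notMem hω]; exact zero_le
    have h2 := drift_bound hPbarm hlaw hcompat hCmeas hWmeas hdriftout (m - 1) l z
    rw [Nat.sub_add_cancel hm] at h2
    exact h1.trans h2
  -- the key bound for the sets T m
  have keyT : ∀ (m l : ℕ), 1 ≤ m → ∀ z : X × Θ,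
      law l z (T m) ≤ min (ENNReal.ofReal Mb / ENNReal.ofReal M')
        (E / ENNReal.ofReal (r m)) := by
    intro m l hm z
    by_cases hz : z.1 ∈ C
    · refine le_min ?_ ?_
      · have h1 := markovW m l hm z (T m) (hTmeas m) Set.inter_subset_right
        exact h1.trans (ENNReal.div_le_div_right (hMb z.2 z.1 hz) _)
      · have hsub : T m ⊆ noHitSet C 1 (m - 1) := fun ω hω => hω.2.1
        have h1 : law l z (T m) ≤ law l z (noHitSet C 1 (m - 1)) := measure_mono hsub
        have h3 : ENNReal.ofReal (r m) * law l z (noHitSet C 1 (m - 1)) ≤ E :=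
          (hit_bound hCmeas hrmono m l z hm).trans (hEle l z hz)
        refine h1.trans ?_
        rw [ENNReal.le_div_iff_mul_le (Or.inl ((ENNReal.ofReal_pos.2 (hrpos m)).ne'))
          (Or.inl ENNReal.ofReal_ne_top)]
        rwa [mul_comm]
    · have hsub : T m ⊆ {ω : ℕ → X × Θ | ω 0 ∈ {p : X × Θ | p.1 ∈ C}} := fun ω hω => hω.1
      have hnull : law l z {ω : ℕ → X × Θ | ω 0 ∈ {p : X × Θ | p.1 ∈ C}} = 0 := by
        rw [law_eval_zero_mem hPbarm hlaw l z (S := {p : X × Θ | p.1 ∈ C})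
          (measurable_fst hCmeas)]
        exact Set.indicator_of_notMem hz 1
      rw [measure_mono_null hsub hnull]
      exact zero_le
  have hbindA : ∀ S : Set (ℕ → X × Θ), MeasurableSet S →
      chainLaw law ξ1 ξ2 S = ∫⁻ z, law 0 z S ∂(ξ1.prod ξ2) := by
    intro S hS
    rw [chainLaw, Measure.bind_apply hS (hlaw.meas 0).aemeasurable]
  -- bound the measure of the shifted sets
  have hSj : ∀ j, 1 ≤ j → j + 1 ≤ n →
      chainLaw law ξ1 ξ2 (shift j ⁻¹' T (n - j))
        ≤ min (ENNReal.ofReal Mb / ENNReal.ofReal M') (E / ENNReal.ofReal (r (n - j))) := by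
    intro j hj1 hjn
    have hm1 : 1 ≤ n - j := by omega
    have hSmeas : MeasurableSet (shift j ⁻¹' T (n - j)) :=
      (hTmeas (n - j)).preimage (measurable_shift j)
    rw [hbindA _ hSmeas]
    have hz : ∀ z : X × Θ, law 0 z (shift j ⁻¹' T (n - j))
        ≤ min (ENNReal.ofReal Mb / ENNReal.ofReal M') (E / ENNReal.ofReal (r (n - j))) := by
      intro z
      have h1 : law 0 z (shift j ⁻¹' T (n - j)) = ((law 0 z).map (shift j)) (T (n - j)) :=
        (Measure.map_apply (measurable_shift j) (hTmeas (n - j))).symm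
      have h0j : (0 : ℕ) + j = j := by omega
      rw [h1, map_shift_law hPbarm hlaw j 0 z, h0j,
        Measure.bind_apply (hTmeas (n - j)) (hlaw.meas j).aemeasurable]
      haveI : IsProbabilityMeasure ((law 0 z).map (fun ω : ℕ → X × Θ => ω j)) := by
        haveI := hlaw.prob 0 z
        exact Measure.isProbabilityMeasure_map (measurable_pi_apply j).aemeasurable
      calc ∫⁻ z', law j z' (T (n - j)) ∂((law 0 z).map (fun ω : ℕ → X × Θ => ω j))
          ≤ ∫⁻ _, min (ENNReal.ofReal Mb / ENNReal.ofReal M') (E / ENNReal.ofReal (r (n - j)))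
              ∂((law 0 z).map (fun ω : ℕ → X × Θ => ω j)) :=
            lintegral_mono fun z' => keyT (n - j) j hm1 z'
        _ = min (ENNReal.ofReal Mb / ENNReal.ofReal M') (E / ENNReal.ofReal (r (n - j))) := by
            rw [lintegral_const, measure_univ, mul_one]
    calc ∫⁻ z, law 0 z (shift j ⁻¹' T (n - j)) ∂(ξ1.prod ξ2)
        ≤ ∫⁻ _, min (ENNReal.ofReal Mb / ENNReal.ofReal M')
            (E / ENNReal.ofReal (r (n - j))) ∂(ξ1.prod ξ2) := lintegral_mono hz
      _ = min (ENNReal.ofReal Mb / ENNReal.ofReal M') (E / ENNReal.ofReal (r (n - j))) := by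
          rw [lintegral_const, measure_univ, mul_one]
  -- bound for the "no return" part
  set B0 : Set (ℕ → X × Θ) := noHitSet C 1 (n - 1) ∩ {ω | M' ≤ W ((ω n).1)} with hB0def
  have hB0meas : MeasurableSet B0 := (measurable_noHitSet hCmeas 1 (n - 1)).inter (hAmeas n)
  have hKzmeas : MeasurableSet {z : X × Θ | (K:ℝ) ≤ W z.1} :=
    (hWmeas.comp measurable_fst) measurableSet_Ici
  have hB0 : chainLaw law ξ1 ξ2 B0
      ≤ ξ1 {x | (K:ℝ) ≤ W x} + ENNReal.ofReal (max (K:ℝ) Mb) / ENNReal.ofReal M' := by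
    rw [hbindA _ hB0meas]
    have hz : ∀ z : X × Θ, law 0 z B0
        ≤ ({z : X × Θ | (K:ℝ) ≤ W z.1}).indicator (fun _ => (1:ℝ≥0∞)) z
          + ENNReal.ofReal (max (K:ℝ) Mb) / ENNReal.ofReal M' := by
      intro z
      by_cases hKz : (K:ℝ) ≤ W z.1
      · haveI := hlaw.prob 0 z
        calc law 0 z B0 ≤ 1 := prob_le_one
          _ ≤ _ := by
              rw [Set.indicator_of_mem (show z ∈ {z : X × Θ | (K:ℝ) ≤ W z.1} from hKz)]
              exact le_self_add
      · have h1 := markovW n 0 hn z B0 hB0meas (subset_refl _)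
        have hF : (∫⁻ y, ENNReal.ofReal (W y) ∂(P z.2 z.1))
            ≤ ENNReal.ofReal (max (K:ℝ) Mb) := by
          by_cases hzC : z.1 ∈ C
          · exact (hMb z.2 z.1 hzC).trans (ENNReal.ofReal_le_ofReal (le_max_right _ _))
          · refine (hdriftout z.2 z.1 hzC).trans (ENNReal.ofReal_le_ofReal ?_)
            exact le_trans (not_le.1 hKz).le (le_max_left _ _)
        rw [Set.indicator_of_notMem (show z ∉ {z : X × Θ | (K:ℝ) ≤ W z.1} from hKz), zero_add]
        exact h1.trans (ENNReal.div_le_div_right hF _)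
    calc ∫⁻ z, law 0 z B0 ∂(ξ1.prod ξ2)
        ≤ ∫⁻ z, (({z : X × Θ | (K:ℝ) ≤ W z.1}).indicator (fun _ => (1:ℝ≥0∞)) z
            + ENNReal.ofReal (max (K:ℝ) Mb) / ENNReal.ofReal M') ∂(ξ1.prod ξ2) :=
          lintegral_mono hz
      _ = ξ1 {x | (K:ℝ) ≤ W x} + ENNReal.ofReal (max (K:ℝ) Mb) / ENNReal.ofReal M' := by
          rw [lintegral_add_right _ measurable_const, lintegral_const, measure_univ, mul_one,
            lintegral_indicator_const hKzmeas, one_mul]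
          congr 1
          have hprod : {z : X × Θ | (K:ℝ) ≤ W z.1}
              = {x : X | (K:ℝ) ≤ W x} ×ˢ (Set.univ : Set Θ) := by
            ext p; simp [Set.mem_prod]
          rw [hprod, Measure.prod_prod, measure_univ, mul_one]
  -- decomposition of the target event
  have hsub : {ω : ℕ → X × Θ | M' ≤ W ((ω n).1)}
      ⊆ B0 ∪ ⋃ j ∈ Finset.Icc 1 (n - 1), shift j ⁻¹' T (n - j) := by
    intro ω hω
    by_cases hall : ∀ k, 1 ≤ k → k ≤ n - 1 → (ω k).1 ∉ C
    · exact Or.inl ⟨hall, hω⟩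
    · right
      push_neg at hall
      obtain ⟨k0, hk01, hk0n, hk0C⟩ := hall
      have hne : ((Finset.Icc 1 (n - 1)).filter (fun k => (ω k).1 ∈ C)).Nonempty :=
        ⟨k0, by
          rw [Finset.mem_filter, Finset.mem_Icc]
          exact ⟨⟨hk01, hk0n⟩, hk0C⟩⟩
      set j := ((Finset.Icc 1 (n - 1)).filter (fun k => (ω k).1 ∈ C)).max' hne with hjdef
      have hjmem := ((Finset.Icc 1 (n - 1)).filter (fun k => (ω k).1 ∈ C)).max'_mem hne
      rw [← hjdef, Finset.mem_filter, Finset.mem_Icc] at hjmem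
      obtain ⟨⟨hj1, hjn1⟩, hjC⟩ := hjmem
      simp only [Set.mem_iUnion]
      refine ⟨j, Finset.mem_Icc.2 ⟨hj1, hjn1⟩, ?_⟩
      show shift j ω ∈ T (n - j)
      refine ⟨?_, ?_, ?_⟩
      · show (ω (0 + j)).1 ∈ C
        rw [Nat.zero_add]; exact hjC
      · intro k hk1 hk2
        show (ω (k + j)).1 ∉ C
        intro hmC
        have hks : k + j ∈ (Finset.Icc 1 (n - 1)).filter (fun k => (ω k).1 ∈ C) := by
          rw [Finset.mem_filter, Finset.mem_Icc]
          exact ⟨⟨by omega, by omega⟩, hmC⟩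
        have hle := Finset.le_max' _ (k + j) hks
        rw [← hjdef] at hle
        omega
      · show M' ≤ W ((ω (n - j + j)).1)
        have hnj : n - j + j = n := by omega
        rw [hnj]; exact hω
  have hmain : chainLaw law ξ1 ξ2 {ω : ℕ → X × Θ | M' ≤ W ((ω n).1)}
      ≤ chainLaw law ξ1 ξ2 B0
        + ∑ j ∈ Finset.Icc 1 (n - 1), chainLaw law ξ1 ξ2 (shift j ⁻¹' T (n - j)) :=
    (measure_mono hsub).trans ((measure_union_le _ _).trans
      (add_le_add_right (measure_biUnion_finset_le _ _) _))
  -- bound the sum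
  set MbT : ℝ≥0∞ := ENNReal.ofReal Mb / ENNReal.ofReal M' with hMbTdef
  have hterm : ∀ j ∈ Finset.Icc 1 (n - 1),
      chainLaw law ξ1 ξ2 (shift j ⁻¹' T (n - j))
        ≤ (if n - j < m0 then MbT else fE (n - j)) := by
    intro j hj
    rw [Finset.mem_Icc] at hj
    have h := hSj j hj.1 (by omega)
    by_cases hc : n - j < m0
    · rw [if_pos hc]; exact h.trans (min_le_left _ _)
    · rw [if_neg hc]
      refine h.trans (le_trans (min_le_right _ _) ?_)
      rw [hfEdef]
    -- fE (n - j) = E / ofReal (r (n - j)) definitionally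
  have hsum2 : ∑ j ∈ Finset.Icc 1 (n - 1), (if n - j < m0 then MbT else fE (n - j))
      = ∑ m ∈ Finset.Icc 1 (n - 1), (if m < m0 then MbT else fE m) := by
    refine Finset.sum_nbij' (fun j => n - j) (fun m => n - m) ?_ ?_ ?_ ?_ ?_
    · intro a ha; rw [Finset.mem_Icc] at ha; rw [Finset.mem_Icc]; omega
    · intro a ha; rw [Finset.mem_Icc] at ha; rw [Finset.mem_Icc]; omega
    · intro a ha; rw [Finset.mem_Icc] at ha; omega
    · intro a ha; rw [Finset.mem_Icc] at ha; omega
    · intro a ha; rfl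
  have hsum3 : ∑ m ∈ Finset.Icc 1 (n - 1), (if m < m0 then MbT else fE m)
      ≤ (m0 : ℝ≥0∞) * MbT + ENNReal.ofReal (ε / 3) := by
    rw [← Finset.sum_filter_add_sum_filter_not (Finset.Icc 1 (n - 1)) (fun m => m < m0)]
    refine add_le_add ?_ ?_
    · have hcongr : ∀ m ∈ (Finset.Icc 1 (n - 1)).filter (fun m => m < m0),
          (if m < m0 then MbT else fE m) = MbT := fun m hm =>
        if_pos (Finset.mem_filter.1 hm).2
      rw [Finset.sum_congr rfl hcongr, Finset.sum_const, nsmul_eq_mul]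
      have hcard : ((Finset.Icc 1 (n - 1)).filter (fun m => m < m0)).card ≤ m0 := by
        calc ((Finset.Icc 1 (n - 1)).filter (fun m => m < m0)).card
            ≤ (Finset.range m0).card := Finset.card_le_card
              (fun m hm => Finset.mem_range.2 (Finset.mem_filter.1 hm).2)
          _ = m0 := Finset.card_range m0
      exact mul_le_mul' (by exact_mod_cast hcard) le_rfl
    · have hcongr : ∀ m ∈ (Finset.Icc 1 (n - 1)).filter (fun m => ¬ m < m0),
          (if m < m0 then MbT else fE m) = fE m := fun m hm =>
        if_neg (Finset.mem_filter.1 hm).2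
      rw [Finset.sum_congr rfl hcongr]
      have hsubset : (Finset.Icc 1 (n - 1)).filter (fun m => ¬ m < m0)
          ⊆ (Finset.range n).image (fun k => k + m0) := by
        intro m hm
        rw [Finset.mem_filter, Finset.mem_Icc] at hm
        rw [Finset.mem_image]
        exact ⟨m - m0, Finset.mem_range.2 (by omega), by omega⟩
      calc ∑ m ∈ (Finset.Icc 1 (n - 1)).filter (fun m => ¬ m < m0), fE m
          ≤ ∑ m ∈ (Finset.range n).image (fun k => k + m0), fE m :=
            Finset.sum_le_sum_of_subset hsubset
        _ = ∑ k ∈ Finset.range n, fE (k + m0) :=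
            Finset.sum_image (fun a _ b _ hab => by omega)
        _ ≤ ∑' k, fE (k + m0) := ENNReal.sum_le_tsum _
        _ ≤ ENNReal.ofReal (ε / 3) := hm0
  have hsumtotal : ∑ j ∈ Finset.Icc 1 (n - 1), chainLaw law ξ1 ξ2 (shift j ⁻¹' T (n - j))
      ≤ (m0 : ℝ≥0∞) * MbT + ENNReal.ofReal (ε / 3) :=
    (Finset.sum_le_sum hterm).trans (hsum2 ▸ hsum3)
  -- arithmetic with the constant M
  have hdiv : ENNReal.ofReal (max (K:ℝ) Mb) / ENNReal.ofReal M' + (m0 : ℝ≥0∞) * MbT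
      ≤ ENNReal.ofReal (ε / 3) := by
    have h1 : ENNReal.ofReal (max (K:ℝ) Mb) + (m0 : ℝ≥0∞) * ENNReal.ofReal Mb
        ≤ ENNReal.ofReal d := by
      rw [hddef, ENNReal.ofReal_add hmax0
        (mul_nonneg (Nat.cast_nonneg m0) (le_max_right Mb 0)),
        ENNReal.ofReal_mul (Nat.cast_nonneg m0), ENNReal.ofReal_natCast]
      exact add_le_add le_rfl
        (mul_le_mul' le_rfl (ENNReal.ofReal_le_ofReal (le_max_left _ _)))
    have hM'd : 3 * d / ε ≤ M' := le_trans (le_max_right _ _) hM'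
    calc ENNReal.ofReal (max (K:ℝ) Mb) / ENNReal.ofReal M' + (m0 : ℝ≥0∞) * MbT
        = (ENNReal.ofReal (max (K:ℝ) Mb) + (m0 : ℝ≥0∞) * ENNReal.ofReal Mb)
            / ENNReal.ofReal M' := by
          rw [hMbTdef, ENNReal.add_div, mul_div_assoc]
      _ ≤ ENNReal.ofReal d / ENNReal.ofReal M' := ENNReal.div_le_div_right h1 _
      _ = ENNReal.ofReal (d / M') := (ENNReal.ofReal_div_of_pos hM'pos).symm
      _ ≤ ENNReal.ofReal (ε / 3) := by
          apply ENNReal.ofReal_le_ofReal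
          rw [div_le_iff₀ hM'pos]
          have h2 : 3 * d ≤ M' * ε := by
            have := (div_le_iff₀ hε).1 hM'd
            linarith
          linarith
  -- put everything together
  calc chainLaw law ξ1 ξ2 {ω : ℕ → X × Θ | M' ≤ W ((ω n).1)}
      ≤ chainLaw law ξ1 ξ2 B0
        + ∑ j ∈ Finset.Icc 1 (n - 1), chainLaw law ξ1 ξ2 (shift j ⁻¹' T (n - j)) := hmain
    _ ≤ (ξ1 {x | (K:ℝ) ≤ W x} + ENNReal.ofReal (max (K:ℝ) Mb) / ENNReal.ofReal M')
        + ((m0 : ℝ≥0∞) * MbT + ENNReal.ofReal (ε / 3)) := add_le_add hB0 hsumtotal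
    _ = ξ1 {x | (K:ℝ) ≤ W x}
        + (ENNReal.ofReal (max (K:ℝ) Mb) / ENNReal.ofReal M' + (m0 : ℝ≥0∞) * MbT)
        + ENNReal.ofReal (ε / 3) := by ring
    _ ≤ ENNReal.ofReal (ε / 3) + ENNReal.ofReal (ε / 3) + ENNReal.ofReal (ε / 3) :=
        add_le_add (add_le_add hK hdiv) le_rfl
    _ = ENNReal.ofReal ε := by
        rw [← ENNReal.ofReal_add (by linarith) (by linarith),
          ← ENNReal.ofReal_add (by linarith) (by linarith)]
        congr 1
        ring


end AdaptiveMCMC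
end
end
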